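/- arXiv:2307.15415 — 3 statements merged into one kernel-verified Lean document; each statement's English description precedes it below -/
import Mathlib

section
/- Let α > −1, n ≥ 1, and set λ_n^L = m(n)/m(n−1). The polynomial y(x) = ∑_{p=0}^n (a_p/m(p)) x^p, where a_0 = 1, a_1 = −λ_n^L/(α+1), and for 2 ≤ p ≤ n, a_p = −(m(p) λ_n^L)/(m(1)(α+1)) · ∏_{j=1}^{p−1} ( (m(j)/m(j−1) − λ_n^L) / ( (m(j+1)/m(j)) (m(j)/m(j−1) + α + 1) ) ), satisfies the moment differential equation x ∂_m² y + (α+1−x) ∂_m y + λ_n^L y = 0. -/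
open PowerSeries Finset

/-- The moment derivative associated to a sequence `m`. -/
noncomputable def mderiv (m : ℕ → ℝ) (f : PowerSeries ℂ) : PowerSeries ℂ :=
  PowerSeries.mk fun p => ((m (p + 1) / m p : ℝ) : ℂ) * PowerSeries.coeff (R := ℂ) (p + 1) f

private lemma stmt3_aux (L α m1 mp mp1 s d P ap ap1 : ℝ)
    (hm1 : m1 ≠ 0) (hmp : mp ≠ 0) (hmp1 : mp1 ≠ 0) (hα : α + 1 ≠ 0) (hd : d ≠ 0)
    (h1 : ap = -(mp * L) / (m1 * (α + 1)) * P)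
    (h2 : ap1 = -(mp1 * L) / (m1 * (α + 1)) * (P * (s / ((mp1 / mp) * d)))) :
    ap1 * d = ap * s := by
  subst h1 h2
  field_simp

private lemma stmt3_aux2 (x y z a b L α : ℝ) (hx : x ≠ 0) (hy : y ≠ 0) (hz : z ≠ 0) :
    y / x * (z / y * (b / z)) + (α + 1) * (z / y * (b / z)) - y / x * (a / y) + L * (a / y)
      = (b * (y + (α + 1) * x) - a * (y - L * x)) / (x * y) := by
  field_simp
  ring

/-- The generalized Laguerre polynomial solves the moment differential equation
`x ∂_m² y + (α+1-x) ∂_m y + λ_n^L y = 0`, with `λ_n^L = m(n)/m(n-1)`. -/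
theorem stmt3 (m : ℕ → ℝ) (hm : ∀ p, 0 < m p) (hm0 : m 0 = 1)
    (α : ℝ) (hα : -1 < α) (n : ℕ) (hn : 1 ≤ n)
    (a : ℕ → ℝ) (ha0 : a 0 = 1)
    (ha1 : a 1 = -(m n / m (n - 1)) / (α + 1))
    (hap : ∀ p, 2 ≤ p → p ≤ n → a p =
      -(m p * (m n / m (n - 1))) / (m 1 * (α + 1)) *
        ∏ j ∈ Finset.Icc 1 (p - 1),
          ((m j / m (j - 1) - m n / m (n - 1)) /
            ((m (j + 1) / m j) * (m j / m (j - 1) + α + 1))))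
    (y : PowerSeries ℂ)
    (hy : y = PowerSeries.mk fun p => if p ≤ n then ((a p / m p : ℝ) : ℂ) else 0) :
    (X : PowerSeries ℂ) * mderiv m (mderiv m y)
      + (C (R := ℂ) ((α : ℂ) + 1) - X) * mderiv m y
      + C (R := ℂ) ((m n / m (n - 1) : ℝ) : ℂ) * y = 0 := by
  have hmne : ∀ p, m p ≠ 0 := fun p => (hm p).ne'
  have hα1 : (0:ℝ) < α + 1 := by linarith
  set L : ℝ := m n / m (n - 1) with hL
  clear_value L
  set B : ℕ → ℝ := fun p => if p ≤ n then a p / m p else 0 with hB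
  -- key recurrence
  have key : ∀ p, 1 ≤ p → p + 1 ≤ n →
      a (p + 1) * (m p + (α + 1) * m (p - 1)) = a p * (m p - L * m (p - 1)) := by
    intro p hp1 hpn
    suffices base : a (p + 1) * (m p / m (p - 1) + α + 1) = a p * (m p / m (p - 1) - L) by
      field_simp [hmne (p - 1)] at base
      linear_combination base
    have hd : (0:ℝ) < m p / m (p - 1) + α + 1 := by
      have := div_pos (hm p) (hm (p - 1)); linarith
    rcases Nat.lt_or_ge p 2 with hp2 | hp2
    · interval_cases p
      · have h2 := hap 2 le_rfl hpn
        simp only [Finset.Icc_self, Finset.prod_singleton] at h2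
        norm_num at h2 ⊢
        refine stmt3_aux L α (m 1) (m 1) (m 2) (m 1 / m 0 - L) (m 1 / m 0 + α + 1) 1
          (a 1) (a 2) (hmne 1) (hmne 1) (hmne 2) hα1.ne' ?_ ?_ ?_
        · norm_num at hd; exact hd.ne'
        · rw [ha1, mul_one, neg_div, neg_div, mul_div_mul_left L (α + 1) (hmne 1)]
        · rw [h2]; ring
    · have h1 := hap p hp2 (by omega)
      have h2 := hap (p + 1) (by omega) hpn
      have hpr : p + 1 - 1 = p := by omega
      rw [hpr] at h2
      have hsplit : ∏ j ∈ Finset.Icc 1 p,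
          ((m j / m (j - 1) - L) / ((m (j + 1) / m j) * (m j / m (j - 1) + α + 1)))
          = (∏ j ∈ Finset.Icc 1 (p - 1),
              ((m j / m (j - 1) - L) / ((m (j + 1) / m j) * (m j / m (j - 1) + α + 1)))) *
            ((m p / m (p - 1) - L) / ((m (p + 1) / m p) * (m p / m (p - 1) + α + 1))) := by
        have hp' : p = (p - 1) + 1 := by omega
        rw [hp', Finset.prod_Icc_succ_top (by omega)]
        rw [← hp']
      rw [hsplit] at h2
      exact stmt3_aux L α (m 1) (m p) (m (p + 1)) (m p / m (p - 1) - L)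
        (m p / m (p - 1) + α + 1)
        (∏ j ∈ Finset.Icc 1 (p - 1),
          ((m j / m (j - 1) - L) / ((m (j + 1) / m j) * (m j / m (j - 1) + α + 1))))
        (a p) (a (p + 1)) (hmne 1) (hmne p) (hmne (p + 1)) hα1.ne' hd.ne'
        h1 h2
  -- coefficient equation
  have coeffeq : ∀ q : ℕ,
      (m (q + 1) / m q) * ((m (q + 2) / m (q + 1)) * B (q + 2))
        + (α + 1) * ((m (q + 2) / m (q + 1)) * B (q + 2))
        - (m (q + 1) / m q) * B (q + 1) + L * B (q + 1) = 0 := by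
    intro q
    rcases Nat.lt_or_ge n (q + 1) with h1 | h1
    · have b1 : B (q + 1) = 0 := by simp only [hB]; rw [if_neg (by omega)]
      have b2 : B (q + 2) = 0 := by simp only [hB]; rw [if_neg (by omega)]
      rw [b1, b2]; ring
    rcases Nat.lt_or_ge n (q + 2) with h2 | h2
    · -- n = q + 1
      have hnq : n = q + 1 := by omega
      have b2 : B (q + 2) = 0 := by simp only [hB]; rw [if_neg (by omega)]
      have hLq : L = m (q + 1) / m q := by rw [hL, hnq]; norm_num
      rw [b2, hLq]; ring
    · -- q + 2 ≤ n
      have b1 : B (q + 1) = a (q + 1) / m (q + 1) := by simp only [hB]; rw [if_pos (by omega)]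
      have b2 : B (q + 2) = a (q + 2) / m (q + 2) := by simp only [hB]; rw [if_pos (by omega)]
      have k := key (q + 1) (by omega) h2
      have hq1 : q + 1 - 1 = q := by omega
      rw [hq1] at k
      rw [b1, b2]
      rw [stmt3_aux2 (m q) (m (q + 1)) (m (q + 2)) (a (q + 1)) (a (q + 2)) L α
        (hmne q) (hmne (q + 1)) (hmne (q + 2)), k, sub_self, zero_div]
  -- now the power series identity
  subst hy
  have hBc : ∀ p, (if p ≤ n then ((a p / m p : ℝ) : ℂ) else 0) = ((B p : ℝ) : ℂ) := by
    intro p; simp [hB, apply_ite (fun x : ℝ => (x : ℂ))]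
  have hC : ((α : ℂ) + 1) = ((α + 1 : ℝ) : ℂ) := by push_cast; ring
  rw [hC]
  ext p
  rcases p with _ | q
  · simp only [map_add, map_sub, map_zero, sub_mul, coeff_zero_X_mul, coeff_C_mul,
      mderiv, coeff_mk, hBc]
    have e0 : (α + 1) * ((m 1 / m 0) * B 1) + L * B 0 = 0 := by
      have b0 : B 0 = 1 := by simp [hB, ha0, hm0]
      have b1 : B 1 = a 1 / m 1 := by simp only [hB]; rw [if_pos hn]
      rw [b0, b1, ha1, hm0]
      field_simp [hmne 1, hα1.ne']
      ring
    have e0c : ((α + 1 : ℝ) : ℂ) * (((m 1 / m 0 : ℝ) : ℂ) * ((B 1 : ℝ) : ℂ))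
        + ((L : ℝ) : ℂ) * ((B 0 : ℝ) : ℂ) = 0 := by exact_mod_cast congrArg (fun x : ℝ => (x : ℂ)) e0
    linear_combination e0c
  · simp only [map_add, map_sub, map_zero, sub_mul, coeff_succ_X_mul, coeff_C_mul,
      mderiv, coeff_mk, hBc, show ∀ q : ℕ, q + 1 + 1 = q + 2 from fun _ => rfl]
    have ec : ((m (q + 1) / m q : ℝ) : ℂ) * (((m (q + 2) / m (q + 1) : ℝ) : ℂ) * ((B (q + 2) : ℝ) : ℂ))
        + ((α + 1 : ℝ) : ℂ) * (((m (q + 2) / m (q + 1) : ℝ) : ℂ) * ((B (q + 2) : ℝ) : ℂ))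
        - ((m (q + 1) / m q : ℝ) : ℂ) * ((B (q + 1) : ℝ) : ℂ)
        + ((L : ℝ) : ℂ) * ((B (q + 1) : ℝ) : ℂ) = 0 := by
      exact_mod_cast congrArg (fun x : ℝ => (x : ℂ)) (coeffeq q)
    linear_combination ec
end

section
/- Let n ≥ 2 be even and λ_n^H = 2m(n)/m(n−1). Then the polynomial y(x) = ∑_{k=0}^{n/2} (a_{2k}/m(2k)) x^{2k}, with a_0 = 1, a_2 = −λ_n^H, and a_{2k} = −(m(2k) λ_n^H / m(2)) ∏_{j=1}^{k−1} ( m(2j)(2m(2j)/m(2j−1) − λ_n^H) / m(2j+2) ) for k ≥ 2, is an even polynomial of degree exactly n solving ∂_m² y − 2x ∂_m y + λ_n^H y = 0. -/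
open PowerSeries Finset

/-- For even `n ≥ 2`, the even generalized Hermite polynomial of degree exactly `n`
solves `∂_m² y - 2x ∂_m y + λ_n^H y = 0`, `λ_n^H = 2 m(n)/m(n-1)`. -/
theorem stmt6 (m : ℕ → ℝ) (hm : ∀ p, 0 < m p) (hm0 : m 0 = 1)
    (n : ℕ) (hn : 2 ≤ n) (hev : Even n)
    (hne : ∀ j, 1 ≤ j → j ≤ n / 2 - 1 → 2 * m (2 * j) / m (2 * j - 1) ≠ 2 * m n / m (n - 1))
    (b : ℕ → ℝ) (hb0 : b 0 = 1)
    (hb1 : b 1 = -(2 * m n / m (n - 1)))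
    (hbk : ∀ k, 2 ≤ k → b k =
      -(m (2 * k) * (2 * m n / m (n - 1)) / m 2) *
        ∏ j ∈ Finset.Icc 1 (k - 1),
          (m (2 * j) * (2 * m (2 * j) / m (2 * j - 1) - 2 * m n / m (n - 1)) / m (2 * j + 2)))
    (y : PowerSeries ℂ)
    (hy : y = PowerSeries.mk fun p =>
      if p % 2 = 0 ∧ p ≤ n then ((b (p / 2) / m p : ℝ) : ℂ) else 0) :
    mderiv m (mderiv m y) - 2 * (X : PowerSeries ℂ) * mderiv m y
        + C (R := ℂ) ((2 * m n / m (n - 1) : ℝ) : ℂ) * y = 0 ∧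
    (∀ p, Odd p → PowerSeries.coeff (R := ℂ) p y = 0) ∧
    (∀ p, n < p → PowerSeries.coeff (R := ℂ) p y = 0) ∧
    PowerSeries.coeff (R := ℂ) n y ≠ 0 := by
  have hmne : ∀ p, m p ≠ 0 := fun p => (hm p).ne'
  have hnev : n % 2 = 0 := Nat.even_iff.mp hev
  set L : ℝ := 2 * m n / m (n - 1) with hLdef
  have hL : 0 < L := div_pos (by linarith [hm n]) (hm (n - 1))
  clear_value L
  -- uniform formula for b k, k ≥ 1
  have hbk' : ∀ k, 1 ≤ k → b k =
      -(m (2 * k) * L / m 2) *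
        ∏ j ∈ Finset.Icc 1 (k - 1),
          (m (2 * j) * (2 * m (2 * j) / m (2 * j - 1) - L) / m (2 * j + 2)) := by
    intro k hk
    rcases eq_or_lt_of_le hk with h | h
    · rw [← h]
      rw [show Finset.Icc 1 0 = (∅ : Finset ℕ) from Finset.Icc_eq_empty (by omega),
        Finset.prod_empty, mul_one, hb1, show 2 * 1 = 2 from rfl]
      rw [mul_comm, mul_div_assoc, div_self (hmne 2), mul_one]
    · exact hbk k h
  -- the recurrence
  have hrec : ∀ k, 1 ≤ k → b (k + 1) = (2 * m (2 * k) / m (2 * k - 1) - L) * b k := by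
    intro k hk
    obtain ⟨j, rfl⟩ : ∃ j, k = j + 1 := ⟨k - 1, by omega⟩
    rw [hbk' (j + 1 + 1) (by omega), hbk' (j + 1) (by omega)]
    rw [show j + 1 + 1 - 1 = j + 1 from rfl, show j + 1 - 1 = j from rfl]
    rw [Finset.prod_Icc_succ_top (by omega : 1 ≤ j + 1)]
    rw [show 2 * (j + 1) + 2 = 2 * (j + 1 + 1) from by ring]
    set P := ∏ x ∈ Finset.Icc 1 j,
      (m (2 * x) * (2 * m (2 * x) / m (2 * x - 1) - L) / m (2 * x + 2)) with hP
    set a := m (2 * (j + 1)) with ha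
    set c := m (2 * (j + 1 + 1)) with hcd
    set d := m (2 * (j + 1) - 1) with hdd
    set e := m 2 with hed
    have hane : a ≠ 0 := by rw [ha]; exact hmne _
    have hcne : c ≠ 0 := by rw [hcd]; exact hmne _
    have hdne : d ≠ 0 := by rw [hdd]; exact hmne _
    have hene : e ≠ 0 := by rw [hed]; exact hmne _
    clear_value P a c d e
    field_simp
  have hbn : b (n / 2) ≠ 0 := by
    rw [hbk' (n / 2) (by omega)]
    rw [Nat.two_mul_div_two_of_even hev]
    apply mul_ne_zero
    · exact neg_ne_zero.mpr (div_ne_zero (mul_ne_zero (hmne n) hL.ne') (hmne 2))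
    · rw [Finset.prod_ne_zero_iff]
      intro j hj
      rw [Finset.mem_Icc] at hj
      exact div_ne_zero (mul_ne_zero (hmne _)
        (sub_ne_zero.mpr (hne j hj.1 hj.2))) (hmne _)
  have hc : ∀ p, PowerSeries.coeff (R := ℂ) p y =
      if p % 2 = 0 ∧ p ≤ n then ((b (p / 2) / m p : ℝ) : ℂ) else 0 := by
    intro p; rw [hy, coeff_mk]
  have hd : ∀ (f : PowerSeries ℂ) (p : ℕ),
      PowerSeries.coeff (R := ℂ) p (mderiv m f)
        = ((m (p + 1) / m p : ℝ) : ℂ) * PowerSeries.coeff (R := ℂ) (p + 1) f := by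
    intro f p; rw [mderiv, coeff_mk]
  refine ⟨?_, ?_, ?_, ?_⟩
  · ext p
    rw [map_add, map_sub, map_zero, coeff_C_mul]
    rcases p with _ | p
    · -- p = 0
      rw [hd, hd, mul_assoc, show (2 : PowerSeries ℂ) = C (R := ℂ) 2 from (map_ofNat (C (R := ℂ)) 2).symm,
        coeff_C_mul, coeff_zero_X_mul, mul_zero, hc, hc]
      rw [if_pos (⟨by norm_num, by omega⟩ : (0 + 1 + 1) % 2 = 0 ∧ 0 + 1 + 1 ≤ n),
        if_pos (⟨by norm_num, by omega⟩ : 0 % 2 = 0 ∧ (0 : ℕ) ≤ n)]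
      rw [show (0 + 1 + 1) / 2 = 1 from rfl, show (0 : ℕ) / 2 = 0 from rfl]
      have hreal : m (0 + 1) / m 0 * (m (0 + 1 + 1) / m (0 + 1) * (b 1 / m (0 + 1 + 1)))
          + L * (b 0 / m 0) = 0 := by
        rw [hb0, hb1, hm0]
        norm_num
        field_simp [hmne 1, hmne 2]
        ring
      have hC := congrArg (fun r : ℝ => (r : ℂ)) hreal
      push_cast at hC ⊢
      linear_combination hC
    · -- p + 1
      rw [hd, hd, mul_assoc, show (2 : PowerSeries ℂ) = C (R := ℂ) 2 from (map_ofNat (C (R := ℂ)) 2).symm,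
        coeff_C_mul, coeff_succ_X_mul, hd, hc, hc]
      by_cases hpar : (p + 1) % 2 = 0
      · by_cases hle : p + 1 ≤ n
        · by_cases heq : p + 1 = n
          · -- top coefficient
            rw [if_neg (by omega), if_pos ⟨hpar, hle⟩]
            have hreal : m (p + 1 + 1) / m (p + 1) * (m (p + 1 + 1 + 1) / m (p + 1 + 1) * 0)
                - 2 * (m (p + 1) / m p * (b ((p + 1) / 2) / m (p + 1)))
                + L * (b ((p + 1) / 2) / m (p + 1)) = 0 := by
              rw [hLdef, ← heq, show p + 1 - 1 = p from rfl]
              ring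
            have hC := congrArg (fun r : ℝ => (r : ℂ)) hreal
            push_cast at hC ⊢
            linear_combination hC
          · -- interior: p + 3 ≤ n
            have hle3 : p + 1 + 1 + 1 ≤ n := by omega
            rw [if_pos (⟨by omega, hle3⟩ : (p + 1 + 1 + 1) % 2 = 0 ∧ p + 1 + 1 + 1 ≤ n),
              if_pos ⟨hpar, hle⟩]
            obtain ⟨k, hk⟩ : ∃ k, p + 1 = 2 * k := ⟨(p + 1) / 2, by omega⟩
            have hk1 : 1 ≤ k := by omega
            rw [show (p + 1) / 2 = k from by omega, show (p + 1 + 1 + 1) / 2 = k + 1 from by omega]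
            have hreal : m (p + 1 + 1) / m (p + 1)
                  * (m (p + 1 + 1 + 1) / m (p + 1 + 1) * (b (k + 1) / m (p + 1 + 1 + 1)))
                - 2 * (m (p + 1) / m p * (b k / m (p + 1)))
                + L * (b k / m (p + 1)) = 0 := by
              rw [hrec k hk1, show 2 * k - 1 = p from by omega, show 2 * k = p + 1 from hk.symm]
              set u0 := m p with hu0
              set u1 := m (p + 1) with hu1
              set u2 := m (p + 1 + 1) with hu2
              set u3 := m (p + 1 + 1 + 1) with hu3
              have h0 : u0 ≠ 0 := by rw [hu0]; exact hmne _
              have h1 : u1 ≠ 0 := by rw [hu1]; exact hmne _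
              have h2 : u2 ≠ 0 := by rw [hu2]; exact hmne _
              have h3 : u3 ≠ 0 := by rw [hu3]; exact hmne _
              clear_value u0 u1 u2 u3
              field_simp
              ring
            have hC := congrArg (fun r : ℝ => (r : ℂ)) hreal
            push_cast at hC ⊢
            linear_combination hC
        · rw [if_neg (by omega), if_neg (by omega)]
          simp
      · rw [if_neg (by omega), if_neg (by omega)]
        simp
  · intro p hp
    rw [Nat.odd_iff] at hp
    rw [hc, if_neg]
    rintro ⟨h, -⟩
    omega
  · intro p hp
    rw [hc, if_neg]
    rintro ⟨-, h⟩
    omega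
  · rw [hc, if_pos ⟨Nat.even_iff.mp hev, le_refl n⟩]
    exact_mod_cast div_ne_zero hbn (hmne n)
end

section
/- Let q > 0, q ≠ 1, α > −1, n ≥ 1. The polynomial y(x) = ∑_{ν=0}^n a_ν x^ν with a_0 = 1, a_1 = −[n]_q/(α+1), and a_ν = −([n]_q/(α+1)) ∏_{j=1}^{ν−1} ( ([j]_q − [n]_q)/([j+1]_q([j]_q + α + 1)) ) for ν ≥ 2, satisfies the q-difference equation x D_{q,x}² y + (α+1−x) D_{q,x} y + [n]_q y = 0. -/
open PowerSeries Finset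

/-- The `q`-number `[j]_q = (1 - q^j)/(1 - q)`. -/
noncomputable def qnum (q : ℝ) (j : ℕ) : ℝ := (1 - q ^ j) / (1 - q)

/-- The Jackson `q`-derivative on formal power series, `D_q (x^p) = [p]_q x^{p-1}`. -/
noncomputable def qDeriv (q : ℝ) (f : PowerSeries ℂ) : PowerSeries ℂ :=
  PowerSeries.mk fun p => ((qnum q (p + 1) : ℝ) : ℂ) * PowerSeries.coeff (R := ℂ) (p + 1) f

lemma qnum_pos' {q : ℝ} (hq : 0 < q) (hq1 : q ≠ 1) {j : ℕ} (hj : 1 ≤ j) :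
    0 < qnum q j := by
  rcases lt_or_gt_of_ne hq1 with h | h
  · have : q ^ j < 1 := pow_lt_one₀ hq.le h (by omega)
    exact div_pos (by linarith) (by linarith)
  · have : 1 < q ^ j := one_lt_pow₀ h (by omega)
    exact div_pos_iff.mpr (Or.inr ⟨by linarith, by linarith⟩)

lemma qnum_nonneg' {q : ℝ} (hq : 0 < q) (hq1 : q ≠ 1) (j : ℕ) : 0 ≤ qnum q j := by
  cases j with
  | zero => simp [qnum]
  | succ m => exact (qnum_pos' hq hq1 (by omega)).le

/-- The generalized `q`-Laguerre polynomial solves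
`x D_q² y + (α+1-x) D_q y + [n]_q y = 0`. -/
theorem stmt15 (q : ℝ) (hq : 0 < q) (hq1 : q ≠ 1) (α : ℝ) (hα : -1 < α)
    (n : ℕ) (hn : 1 ≤ n)
    (a : ℕ → ℝ) (ha0 : a 0 = 1)
    (ha1 : a 1 = -(qnum q n) / (α + 1))
    (hav : ∀ ν, 2 ≤ ν → ν ≤ n → a ν =
      -(qnum q n / (α + 1)) *
        ∏ j ∈ Finset.Icc 1 (ν - 1),
          ((qnum q j - qnum q n) / (qnum q (j + 1) * (qnum q j + α + 1))))
    (y : PowerSeries ℂ)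
    (hy : y = PowerSeries.mk fun ν => if ν ≤ n then ((a ν : ℝ) : ℂ) else 0) :
    (X : PowerSeries ℂ) * qDeriv q (qDeriv q y)
      + (C (R := ℂ) ((α : ℂ) + 1) - X) * qDeriv q y
      + C (R := ℂ) ((qnum q n : ℝ) : ℂ) * y = 0 := by
  have hα1 : α + 1 ≠ 0 := by linarith
  set c : ℕ → ℝ := fun ν => if ν ≤ n then a ν else 0 with hcdef
  have key : ∀ p : ℕ, qnum q (p + 1) * (qnum q p + α + 1) * c (p + 1)
      = (qnum q p - qnum q n) * c p := by
    intro p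
    rcases lt_trichotomy p n with hpn | heq | hpn
    · have hc1 : c (p + 1) = a (p + 1) := by simp [hcdef, show p + 1 ≤ n by omega]
      have hc0 : c p = a p := by simp [hcdef, show p ≤ n by omega]
      rw [hc1, hc0]
      have hA : qnum q (p + 1) ≠ 0 := (qnum_pos' hq hq1 (by omega)).ne'
      have hB : qnum q p + α + 1 ≠ 0 := by
        have := qnum_nonneg' hq hq1 p; linarith
      match p, hpn, hA, hB with
      | 0, hpn, hA, hB =>
        have h1 : qnum q 1 = 1 := by
          simp only [qnum, pow_one]
          exact div_self (by intro h; apply hq1; linarith)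
        have h0 : qnum q 0 = 0 := by simp [qnum]
        rw [ha0, ha1, h1, h0]
        field_simp
        ring
      | 1, hpn, hA, hB =>
        rw [hav 2 (by norm_num) (by omega), ha1]
        simp only [show (2:ℕ) - 1 = 1 from rfl, Finset.Icc_self, Finset.prod_singleton]
        field_simp
      | (k + 2), hpn, hA, hB =>
        set P : ℝ := ∏ j ∈ Finset.Icc 1 (k + 1),
            ((qnum q j - qnum q n) / (qnum q (j + 1) * (qnum q j + α + 1))) with hP
        have h1 : a (k + 2 + 1) = -(qnum q n / (α + 1)) *
            (P * ((qnum q (k + 2) - qnum q n) /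
              (qnum q (k + 2 + 1) * (qnum q (k + 2) + α + 1)))) := by
          rw [hav (k + 3) (by omega) (by omega)]
          rw [show (k + 3) - 1 = (k + 1) + 1 from rfl,
            Finset.prod_Icc_succ_top (by omega), hP]
        have h2 : a (k + 2) = -(qnum q n / (α + 1)) * P := by
          rw [hav (k + 2) (by omega) (by omega), show (k + 2) - 1 = k + 1 from rfl, hP]
        rw [h1, h2]
        field_simp
    · subst heq
      have hc1 : c (p + 1) = 0 := by simp [hcdef]
      rw [hc1, sub_self]; ring
    · have hc1 : c (p + 1) = 0 := by simp [hcdef, show ¬ p + 1 ≤ n by omega]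
      have hc0 : c p = 0 := by simp [hcdef, show ¬ p ≤ n by omega]
      rw [hc1, hc0]; ring
  have hc : ∀ ν, PowerSeries.coeff (R := ℂ) ν y = ((c ν : ℝ) : ℂ) := by
    intro ν
    rw [hy, PowerSeries.coeff_mk]
    by_cases h : ν ≤ n <;> simp [hcdef, h]
  have keyC := fun p => congrArg (Complex.ofReal) (key p)
  push_cast at keyC
  set β : ℂ := (α : ℂ) + 1 with hβ
  ext k
  cases k with
  | zero =>
    simp only [map_add, map_zero, sub_mul, map_sub, qDeriv,
      PowerSeries.coeff_zero_X_mul, PowerSeries.coeff_C_mul, PowerSeries.coeff_mk, zero_add]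
    rw [hc 0, hc 1]
    have h0 := keyC 0
    have hq0 : qnum q 0 = 0 := by simp [qnum]
    rw [hq0] at h0
    rw [hβ]
    push_cast at h0 ⊢
    linear_combination h0
  | succ p =>
    simp only [map_add, map_zero, sub_mul, map_sub, qDeriv,
      PowerSeries.coeff_succ_X_mul, PowerSeries.coeff_C_mul, PowerSeries.coeff_mk]
    rw [hc (p + 1), hc (p + 2)]
    have h1 := keyC (p + 1)
    rw [hβ]
    push_cast at h1 ⊢
    linear_combination h1
end
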